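/- Let S be a finite set of points in ℝ^d. Then there exists a Tverberg graph for S (a graph with vertex set S whose edge-diameter balls have a common point) whose minimum degree is at least |S|/(d+1). -/

import Mathlib

open Real

/-- The closed ball with diameter segment `ab` in `ℝ^d`. -/
def ballD {d : ℕ} (a b : EuclideanSpace ℝ (Fin d)) : Set (EuclideanSpace ℝ (Fin d)) :=
  Metric.closedBall (midpoint ℝ a b) (dist a b / 2)

lemma ballD_key {d : ℕ} (a b c : EuclideanSpace ℝ (Fin d)) :
    dist c (midpoint ℝ a b) ^ 2 - (dist a b / 2) ^ 2 = inner ℝ (a - c) (b - c) := by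
  rw [dist_eq_norm, dist_eq_norm, midpoint_eq_smul_add, div_pow]
  rw [← real_inner_self_eq_norm_sq, ← real_inner_self_eq_norm_sq]
  simp only [inner_sub_left, inner_sub_right, inner_add_left, inner_add_right,
    real_inner_smul_left, real_inner_smul_right, invOf_eq_inv]
  rw [real_inner_comm b a, real_inner_comm c a, real_inner_comm c b]
  ring

/-- Membership in `ballD a b` is equivalent to a nonpositive inner product. -/
lemma mem_ballD_iff {d : ℕ} (a b c : EuclideanSpace ℝ (Fin d)) :
    c ∈ ballD a b ↔ inner ℝ (a - c) (b - c) ≤ (0 : ℝ) := by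
  have key := ballD_key a b c
  have hd : (0:ℝ) ≤ dist a b / 2 := by positivity
  have hd' : (0:ℝ) ≤ dist c (midpoint ℝ a b) := dist_nonneg
  constructor
  · intro h
    have h' : dist c (midpoint ℝ a b) ≤ dist a b / 2 := h
    nlinarith
  · intro h
    show dist c (midpoint ℝ a b) ≤ dist a b / 2
    nlinarith

/-- Every finite set `S` in `ℝ^d` has a Tverberg graph of minimum degree at least
`|S|/(d+1)`. -/
theorem tverberg_graph_min_degree
    (d : ℕ) (S : Finset (EuclideanSpace ℝ (Fin d))) :
    ∃ Adj : EuclideanSpace ℝ (Fin d) → EuclideanSpace ℝ (Fin d) → Prop,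
      Symmetric Adj ∧
      (∀ a b, Adj a b → a ∈ S ∧ b ∈ S) ∧
      (∃ c, ∀ a b, Adj a b → c ∈ ballD a b) ∧
      (∀ v ∈ S, (S.card : ℝ) / (d + 1) ≤
        ({w | w ∈ S ∧ Adj v w}.ncard : ℝ)) := by
  classical
  set n := S.card with hn
  -- the family of "large" subsets of S
  set s : Finset (Finset (EuclideanSpace ℝ (Fin d))) :=
    S.powerset.filter (fun A => ((S \ A).card : ℝ) * (d + 1) < (n : ℝ)) with hs
  -- Helly: there is a common point of all convex hulls of large subsets
  have hHelly : (⋂ A ∈ s, convexHull ℝ (A : Set (EuclideanSpace ℝ (Fin d)))).Nonempty := by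
    apply Convex.helly_theorem' (𝕜 := ℝ)
    · intro A _; exact convex_convexHull ℝ _
    · intro I hI hIcard
      rcases I.eq_empty_or_nonempty with rfl | hne
      · simp
      rw [finrank_euclideanSpace_fin] at hIcard
      -- counting: the intersection of the sets in I contains a point of S
      have hsum : (∑ A ∈ I, ((S \ A).card : ℝ)) * (d + 1) < (n : ℝ) * (d + 1) := by
        rw [Finset.sum_mul]
        calc ∑ A ∈ I, ((S \ A).card : ℝ) * (d + 1)
            < ∑ _A ∈ I, (n : ℝ) := by
              apply Finset.sum_lt_sum_of_nonempty hne
              intro A hA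
              have := hI hA
              rw [hs, Finset.mem_filter] at this
              exact this.2
          _ = I.card * (n : ℝ) := by rw [Finset.sum_const]; ring
          _ ≤ (d + 1) * (n : ℝ) := by
              apply mul_le_mul_of_nonneg_right _ (by positivity)
              exact_mod_cast hIcard
          _ = (n : ℝ) * (d + 1) := by ring
      have hsum' : (∑ A ∈ I, (S \ A).card) < n := by
        have hpos : (0:ℝ) < (d:ℝ) + 1 := by positivity
        have := lt_of_mul_lt_mul_right hsum (le_of_lt hpos)
        exact_mod_cast this
      have hbU : (I.biUnion (fun A => S \ A)).card < n :=
        lt_of_le_of_lt (Finset.card_biUnion_le) hsum'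
      have hx : (S \ I.biUnion (fun A => S \ A)).Nonempty := by
        rw [← Finset.card_pos]
        have := Finset.card_le_card_sdiff_add_card (s := S) (t := I.biUnion (fun A => S \ A))
        omega
      obtain ⟨x, hx⟩ := hx
      rw [Finset.mem_sdiff] at hx
      refine ⟨x, ?_⟩
      rw [Set.mem_iInter₂]
      intro A hA
      apply subset_convexHull
      by_contra hxA
      exact hx.2 (Finset.mem_biUnion.mpr ⟨A, hA, Finset.mem_sdiff.mpr ⟨hx.1, hxA⟩⟩)
  obtain ⟨c, hc⟩ := hHelly
  rw [Set.mem_iInter₂] at hc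
  -- the centerpoint property
  have hcenter : ∀ v, (v ∈ S) →
      (n : ℝ) / (d + 1) ≤ ((S.filter (fun w => inner ℝ (v - c) (w - c) ≤ (0:ℝ))).card : ℝ) := by
    intro v hv
    by_contra hlt
    push_neg at hlt
    set A := S.filter (fun w => ¬ inner ℝ (v - c) (w - c) ≤ (0:ℝ)) with hA
    have hAs : A ∈ s := by
      rw [hs, Finset.mem_filter, Finset.mem_powerset]
      refine ⟨Finset.filter_subset _ _, ?_⟩
      have : S \ A = S.filter (fun w => inner ℝ (v - c) (w - c) ≤ (0:ℝ)) := by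
        rw [hA]
        ext w
        simp only [Finset.mem_sdiff, Finset.mem_filter, not_and, not_not]
        tauto
      rw [this]
      have hpos : (0:ℝ) < (d:ℝ) + 1 := by positivity
      calc ((S.filter (fun w => inner ℝ (v - c) (w - c) ≤ (0:ℝ))).card : ℝ) * (d + 1)
          < ((n : ℝ) / (d + 1)) * (d + 1) := by
            exact mul_lt_mul_of_pos_right hlt hpos
        _ = (n : ℝ) := by field_simp
    have hcA := hc A hAs
    -- but A lies in an open halfspace not containing c
    have hhalf : (A : Set (EuclideanSpace ℝ (Fin d))) ⊆
        {w | (0:ℝ) < inner ℝ (v - c) (w - c)} := by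
      intro w hw
      rw [Finset.mem_coe, hA, Finset.mem_filter] at hw
      exact lt_of_not_ge hw.2
    have hconv : Convex ℝ {w : EuclideanSpace ℝ (Fin d) | (0:ℝ) < inner ℝ (v - c) (w - c)} := by
      have : {w : EuclideanSpace ℝ (Fin d) | (0:ℝ) < inner ℝ (v - c) (w - c)}
          = {w | (inner ℝ (v - c) c : ℝ) < inner ℝ (v - c) w} := by
        ext w
        simp [inner_sub_right]
      rw [this]
      exact convex_halfSpace_gt (innerSL ℝ (v - c)).toLinearMap.isLinear _
    have := hconv.convexHull_subset_iff.mpr hhalf hcA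
    simp at this
  refine ⟨fun a b => a ∈ S ∧ b ∈ S ∧ inner ℝ (a - c) (b - c) ≤ (0:ℝ), ?_, ?_, ?_, ?_⟩
  · intro a b ⟨ha, hb, hab⟩
    refine ⟨hb, ha, ?_⟩
    rwa [real_inner_comm]
  · exact fun a b h => ⟨h.1, h.2.1⟩
  · exact ⟨c, fun a b h => (mem_ballD_iff a b c).mpr h.2.2⟩
  · intro v hv
    have : {w | w ∈ S ∧ v ∈ S ∧ w ∈ S ∧ inner ℝ (v - c) (w - c) ≤ (0:ℝ)}
        = ((S.filter (fun w => inner ℝ (v - c) (w - c) ≤ (0:ℝ))) : Set _) := by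
      ext w
      simp only [Finset.coe_filter, Set.mem_setOf_eq, Finset.mem_coe]
      tauto
    rw [this, Set.ncard_coe_finset]
    exact hcenter v hv
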